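/- The closed unit interval [0,1] is not a Δ-space. -/

import Mathlib

def IsDeltaSpace (X : Type*) [TopologicalSpace X] : Prop :=
  ∀ D : ℕ → Set X, (∀ n, D (n + 1) ⊆ D n) → (⋂ n, D n) = ∅ →
    ∃ V : ℕ → Set X, (∀ n, IsOpen (V n)) ∧ (∀ n, V (n + 1) ⊆ V n) ∧
      (⋂ n, V n) = ∅ ∧ ∀ n, D n ⊆ V n

theorem unitInterval_not_isDeltaSpace : ¬ IsDeltaSpace (Set.Icc (0 : ℝ) 1) := by
  intro h
  set X := Set.Icc (0 : ℝ) 1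
  obtain ⟨u, hu⟩ := TopologicalSpace.exists_dense_seq X
  set D : ℕ → Set X := fun n => Set.range u \ (u '' Set.Iio n) with hD
  have hdec : ∀ n, D (n + 1) ⊆ D n := by
    intro n
    exact Set.diff_subset_diff_right (Set.image_mono (Set.Iio_subset_Iio (Nat.le_succ n)))
  have hempty : (⋂ n, D n) = ∅ := by
    ext x
    simp only [Set.mem_iInter, Set.mem_empty_iff_false, iff_false]
    intro hx
    obtain ⟨⟨k, rfl⟩, -⟩ := hx 0
    exact (hx (k + 1)).2 ⟨k, by simp, rfl⟩
  obtain ⟨V, hVopen, _, hViInter, hDV⟩ := h D hdec hempty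
  have hVdense : ∀ n, Dense (V n) := fun n =>
    ((hu.diff_finite ((Set.finite_Iio n).image u)).mono (hDV n))
  have := dense_iInter_of_isOpen hVopen hVdense
  rw [hViInter] at this
  exact (this.nonempty (h := ⟨⟨0, by norm_num [X]⟩⟩)).elim (fun x hx => hx.elim)
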